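/- The forgetful functor from (inhabited) groupoids to pregroupoids, sending a groupoid G with object set G₀ to the pregroupoid G(G₀,G₀) with ternary operation y ∘ x⁻¹ ∘ z, has a left adjoint X ↦ X⁺ (the enveloping groupoid), and the unit of the adjunction η : X → X⁺(A,B) is injective. -/

import Mathlib

namespace Kock

/-- A pregroupoid on `A`, `B`: an inhabited type `X` with surjections `α`, `β` and a
partial ternary operation `op y x z` (meaning `y x⁻¹ z`), defined whenever
`β x = β y` and `α x = α z`; partiality is encoded by proof arguments, and the
axioms are quantified over all proofs of the book-keeping conditions. -/
structure Pregroupoid (A B X : Type*) : Type _ where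
  α : X → A
  β : X → B
  nonempty : Nonempty X
  α_surj : Function.Surjective α
  β_surj : Function.Surjective β
  op : (y x z : X) → β x = β y → α x = α z → X
  α_op : ∀ (y x z : X) (h1 : β x = β y) (h2 : α x = α z), α (op y x z h1 h2) = α y
  β_op : ∀ (y x z : X) (h1 : β x = β y) (h2 : α x = α z), β (op y x z h1 h2) = β z
  U1 : ∀ (x z : X) (h1 : β x = β x) (h2 : α x = α z), op x x z h1 h2 = z
  U2 : ∀ (y x : X) (h1 : β x = β y) (h2 : α x = α x), op y x x h1 h2 = y
  G1 : ∀ (v y x z : X) (h1 : β x = β y) (h2 : α x = α z) (h3 : β y = β v)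
      (h4 : α y = α (op y x z h1 h2)) (h5 : β x = β v),
      op v y (op y x z h1 h2) h3 h4 = op v x z h5 h2
  G2 : ∀ (y x z w : X) (h1 : β x = β y) (h2 : α x = α z)
      (h3 : β z = β (op y x z h1 h2)) (h4 : α z = α w) (h5 : α x = α w),
      op (op y x z h1 h2) z w h3 h4 = op y x w h1 h5


open CategoryTheory

/-- An object of the category of pregroupoids. -/
structure PregroupoidObj : Type 1 where
  A : Type
  B : Type
  X : Type
  str : Pregroupoid A B X

/-- A morphism of pregroupoids: maps `ξ₀ : A → A'`, `ξ₁ : B → B'`, `ξ : X → X'`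
commuting with the structural maps and preserving the ternary operation. -/
structure PregroupoidHom (P Q : PregroupoidObj) : Type where
  f0 : P.A → Q.A
  f1 : P.B → Q.B
  f : P.X → Q.X
  hα : ∀ x, Q.str.α (f x) = f0 (P.str.α x)
  hβ : ∀ x, Q.str.β (f x) = f1 (P.str.β x)
  hop : ∀ (y x z : P.X) (h1 : P.str.β x = P.str.β y) (h2 : P.str.α x = P.str.α z)
    (h1' : Q.str.β (f x) = Q.str.β (f y)) (h2' : Q.str.α (f x) = Q.str.α (f z)),
    f (P.str.op y x z h1 h2) = Q.str.op (f y) (f x) (f z) h1' h2'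

/-- The category of pregroupoids. -/
instance : Category PregroupoidObj where
  Hom := PregroupoidHom
  id P := ⟨id, id, id, fun _ => rfl, fun _ => rfl,
    fun _ _ _ _ _ _ _ => rfl⟩
  comp {P Q R} F G := ⟨G.f0 ∘ F.f0, G.f1 ∘ F.f1, G.f ∘ F.f,
    fun x => by simp [Function.comp, G.hα, F.hα],
    fun x => by simp [Function.comp, G.hβ, F.hβ],
    fun y x z h1 h2 h1' h2' => by
      dsimp only [Function.comp]
      rw [F.hop y x z h1 h2 (by rw [F.hβ, F.hβ, h1]) (by rw [F.hα, F.hα, h2])]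
      exact G.hop _ _ _ _ _ h1' h2'⟩
  id_comp _ := rfl
  comp_id _ := rfl
  assoc _ _ _ := rfl

/-- An object of the category of inhabited groupoids. -/
structure GrpdObj : Type 1 where
  C : Type
  [str : Groupoid.{0} C]
  ne : Nonempty C

attribute [instance] GrpdObj.str

/-- The category of inhabited groupoids, with functors as morphisms. -/
instance : Category GrpdObj where
  Hom G H := G.C ⥤ H.C
  id G := Functor.id G.C
  comp F G := F ⋙ G
  id_comp _ := rfl
  comp_id _ := rfl
  assoc _ _ _ := rfl

/-- The arrows of a groupoid `C`, as a single set. -/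
def GArr (C : Type) [Groupoid C] : Type := Σ a b : C, a ⟶ b

/-- The underlying pregroupoid `G(G₀,G₀)` of an inhabited groupoid, with
`yx⁻¹z := y ∘ x⁻¹ ∘ z` (composing from left to right). -/
def underlyingPregroupoid (C : Type) [Groupoid C] (ne : Nonempty C) :
    Pregroupoid C C (GArr C) where
  α s := s.1
  β s := s.2.1
  nonempty := ne.elim fun c => ⟨⟨c, c, 𝟙 c⟩⟩
  α_surj c := ⟨⟨c, c, 𝟙 c⟩, rfl⟩
  β_surj c := ⟨⟨c, c, 𝟙 c⟩, rfl⟩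
  op y x z h1 h2 := ⟨y.1, z.2.1,
    y.2.2 ≫ eqToHom h1.symm ≫ Groupoid.inv x.2.2 ≫ eqToHom h2 ≫ z.2.2⟩
  α_op _ _ _ _ _ := rfl
  β_op _ _ _ _ _ := rfl
  U1 := by
    rintro ⟨a, b, f⟩ ⟨a', b', g⟩ h1 h2
    obtain rfl : a = a' := h2
    refine congrArg (fun h => (⟨a, b', h⟩ : GArr C)) ?_
    simp
  U2 := by
    rintro ⟨a, b, f⟩ ⟨a', b', g⟩ h1 h2
    obtain rfl : b' = b := h1
    refine congrArg (fun h => (⟨a, b', h⟩ : GArr C)) ?_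
    simp
  G1 := by
    rintro ⟨av, bv, fv⟩ ⟨ay, b0, fy⟩ ⟨ax, bx, fx⟩ ⟨az, bz, fz⟩ h1 h2 h3 h4 h5
    obtain rfl : bx = b0 := h1
    obtain rfl : ax = az := h2
    obtain rfl : bx = bv := h3
    refine congrArg (fun h => (⟨av, bz, h⟩ : GArr C)) ?_
    simp
  G2 := by
    rintro ⟨ay, b0, fy⟩ ⟨ax, bx, fx⟩ ⟨az, bz, fz⟩ ⟨aw, bw, fw⟩ h1 h2 h3 h4 h5
    obtain rfl : bx = b0 := h1
    obtain rfl : ax = az := h2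
    obtain rfl : ax = aw := h4
    refine congrArg (fun h => (⟨ay, bw, h⟩ : GArr C)) ?_
    simp

/-- The forgetful functor from inhabited groupoids to pregroupoids,
`G ↦ G(G₀, G₀)`. -/
def forgetToPregroupoid : GrpdObj ⥤ PregroupoidObj where
  obj G := ⟨G.C, G.C, GArr G.C, underlyingPregroupoid G.C G.ne⟩
  map {G H} F :=
    letI F' : G.C ⥤ H.C := F
    { f0 := F'.obj
      f1 := F'.obj
      f := fun s => ⟨F'.obj s.1, F'.obj s.2.1, F'.map s.2.2⟩
      hα := fun _ => rfl
      hβ := fun _ => rfl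
      hop := by
        rintro ⟨ay, b0, fy⟩ ⟨ax, bx, fx⟩ ⟨az, bz, fz⟩ h1 h2 h1' h2'
        obtain rfl : ax = az := h2
        refine congrArg (fun h => (⟨F'.obj ay, F'.obj bz, h⟩ : GArr H.C)) ?_
        simp [underlyingPregroupoid, Groupoid.inv_eq_inv, eqToHom_map] }
  map_id _ := rfl
  map_comp _ _ := rfl

section Envelope

variable {A B X : Type}

namespace Pregroupoid

theorem opL (P : Pregroupoid A B X) (y x z w v : X)
    (h1 : P.β x = P.β y) (h2 : P.α x = P.α z) (h3 : P.β w = P.β z) (h4 : P.α w = P.α v) :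
    P.op (P.op y x z h1 h2) w v (by rw [P.β_op]; exact h3) h4
      = P.op y x (P.op z w v h3 h4) h1 (by rw [P.α_op]; exact h2) := by
  have g1 := P.G1 (P.op y x z h1 h2) z w v h3 h4 (P.β_op y x z h1 h2).symm
    (P.α_op z w v h3 h4).symm (by rw [P.β_op]; exact h3)
  have g2 := P.G2 y x z (P.op z w v h3 h4) h1 h2 (P.β_op y x z h1 h2).symm
    (P.α_op z w v h3 h4).symm (by rw [P.α_op]; exact h2)
  exact g1.symm.trans g2

theorem opM (P : Pregroupoid A B X) (y q s p r : X)
    (h1 : P.β s = P.β q) (h2 : P.α s = P.α p) (h3 : P.β p = P.β y) (h4 : P.α q = P.α r) :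
    P.op y (P.op q s p h1 h2) r (by rw [P.β_op]; exact h3) (by rw [P.α_op]; exact h4)
      = P.op y p (P.op s q r h1.symm h4) h3 (by rw [P.α_op]; exact h2.symm) := by
  have hq : P.op (P.op q s p h1 h2) p s (P.β_op q s p h1 h2).symm h2.symm = q :=
    (P.G2 q s p s h1 h2 (P.β_op q s p h1 h2).symm h2.symm rfl).trans (P.U2 q s h1 rfl)
  have key : P.op y (P.op q s p h1 h2) q (by rw [P.β_op]; exact h3)
        (P.α_op q s p h1 h2) = P.op y p s h3 h2.symm := by
    have g1 := P.G1 y (P.op q s p h1 h2) p s (P.β_op q s p h1 h2).symm h2.symm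
      (by rw [P.β_op]; exact h3) (by simp only [P.α_op]) h3
    simp only [hq] at g1
    exact g1
  have g2 := P.G2 y (P.op q s p h1 h2) q r (by rw [P.β_op]; exact h3)
    (P.α_op q s p h1 h2) (by rw [P.β_op]) h4 ((P.α_op q s p h1 h2).trans h4)
  rw [← g2]
  simp only [key]
  exact P.opL y p s q r h3 h2.symm h1.symm h4

noncomputable def sA (P : Pregroupoid A B X) (a : A) : X := (P.α_surj a).choose

theorem sA_spec (P : Pregroupoid A B X) (a : A) : P.α (P.sA a) = a := (P.α_surj a).choose_spec

noncomputable def sB (P : Pregroupoid A B X) (b : B) : X := (P.β_surj b).choose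

theorem sB_spec (P : Pregroupoid A B X) (b : B) : P.β (P.sB b) = b := (P.β_surj b).choose_spec

end Pregroupoid

/-- The carrier of the enveloping groupoid `X⁺`. -/
abbrev Env (_P : Pregroupoid A B X) : Type := Sum A B

variable (P : Pregroupoid A B X)

/-- Hom-sets of the enveloping groupoid. -/
def EnvHom : Env P → Env P → Type
  | Sum.inl a, Sum.inl a' => {y : X // P.β y = P.β (P.sA a) ∧ P.α y = a'}
  | Sum.inl a, Sum.inr b => {x : X // P.α x = a ∧ P.β x = b}
  | Sum.inr b, Sum.inl a => {x : X // P.α x = a ∧ P.β x = b}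
  | Sum.inr b, Sum.inr b' => {y : X // P.α y = P.α (P.sB b) ∧ P.β y = b'}

noncomputable def envId : ∀ u : Env P, EnvHom P u u
  | Sum.inl a => ⟨P.sA a, rfl, P.sA_spec a⟩
  | Sum.inr b => ⟨P.sB b, rfl, P.sB_spec b⟩

noncomputable def envComp : ∀ {u v w : Env P}, EnvHom P u v → EnvHom P v w → EnvHom P u w
  | Sum.inl _a, Sum.inl a', Sum.inl _a'', f, g =>
      ⟨P.op g.1 (P.sA a') f.1 g.2.1.symm ((P.sA_spec a').trans f.2.2.symm),
        by rw [P.β_op]; exact f.2.1, by rw [P.α_op]; exact g.2.2⟩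
  | Sum.inl a, Sum.inl _a', Sum.inr _b, f, g =>
      ⟨P.op (P.sA a) f.1 g.1 f.2.1 (f.2.2.trans g.2.1.symm),
        by rw [P.α_op]; exact P.sA_spec a, by rw [P.β_op]; exact g.2.2⟩
  | Sum.inl a, Sum.inr _b, Sum.inl _a', f, g =>
      ⟨P.op g.1 f.1 (P.sA a) (f.2.2.trans g.2.2.symm) (f.2.1.trans (P.sA_spec a).symm),
        by rw [P.β_op], by rw [P.α_op]; exact g.2.1⟩
  | Sum.inl _a, Sum.inr b, Sum.inr _b', f, g =>
      ⟨P.op f.1 (P.sB b) g.1 ((P.sB_spec b).trans f.2.2.symm) g.2.1.symm,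
        by rw [P.α_op]; exact f.2.1, by rw [P.β_op]; exact g.2.2⟩
  | Sum.inr _b, Sum.inl a, Sum.inl _a', f, g =>
      ⟨P.op g.1 (P.sA a) f.1 g.2.1.symm ((P.sA_spec a).trans f.2.1.symm),
        by rw [P.α_op]; exact g.2.2, by rw [P.β_op]; exact f.2.2⟩
  | Sum.inr b, Sum.inl _a, Sum.inr _b', f, g =>
      ⟨P.op (P.sB b) f.1 g.1 (f.2.2.trans (P.sB_spec b).symm) (f.2.1.trans g.2.1.symm),
        by rw [P.α_op], by rw [P.β_op]; exact g.2.2⟩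
  | Sum.inr b, Sum.inr _b', Sum.inl _a, f, g =>
      ⟨P.op g.1 f.1 (P.sB b) (f.2.2.trans g.2.2.symm) f.2.1,
        by rw [P.α_op]; exact g.2.1, by rw [P.β_op]; exact P.sB_spec b⟩
  | Sum.inr _b, Sum.inr b', Sum.inr _b'', f, g =>
      ⟨P.op f.1 (P.sB b') g.1 ((P.sB_spec b').trans f.2.2.symm) g.2.1.symm,
        by rw [P.α_op]; exact f.2.1, by rw [P.β_op]; exact g.2.2⟩

noncomputable def envInv : ∀ {u v : Env P}, EnvHom P u v → EnvHom P v u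
  | Sum.inl a, Sum.inl a', f =>
      ⟨P.op (P.sA a) f.1 (P.sA a') f.2.1 (f.2.2.trans (P.sA_spec a').symm),
        by rw [P.β_op], by rw [P.α_op]; exact P.sA_spec a⟩
  | Sum.inl _a, Sum.inr _b, f => f
  | Sum.inr _b, Sum.inl _a, f => f
  | Sum.inr b, Sum.inr b', f =>
      ⟨P.op (P.sB b') f.1 (P.sB b) (f.2.2.trans (P.sB_spec b').symm) f.2.1,
        by rw [P.α_op], by rw [P.β_op]; exact P.sB_spec b⟩

theorem envIdComp : ∀ {u v : Env P} (f : EnvHom P u v), envComp P (envId P u) f = f := by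
  rintro (a|b) (a'|b') f <;> apply Subtype.ext <;> simp only [envComp, envId]
  · exact P.U2 f.1 (P.sA a) _ _
  · exact P.U1 (P.sA a) f.1 _ _
  · exact P.U2 f.1 (P.sB b) _ _
  · exact P.U1 (P.sB b) f.1 _ _

theorem envCompId : ∀ {u v : Env P} (f : EnvHom P u v), envComp P f (envId P v) = f := by
  rintro (a|b) (a'|b') f <;> apply Subtype.ext <;> simp only [envComp, envId]
  · exact P.U1 (P.sA a') f.1 _ _
  · exact P.U2 f.1 (P.sB b') _ _
  · exact P.U1 (P.sA a') f.1 _ _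
  · exact P.U2 f.1 (P.sB b') _ _

theorem envAssoc : ∀ {u v w x : Env P} (f : EnvHom P u v) (g : EnvHom P v w)
    (h : EnvHom P w x), envComp P (envComp P f g) h = envComp P f (envComp P g h) := by
  rintro (a|b) (a'|b') (a''|b'') (a'''|b''') f g h <;> apply Subtype.ext <;>
    simp only [envComp]
  · exact (P.opL h.1 (P.sA a'') g.1 (P.sA a') f.1 _ _ _ _).symm
  · exact P.opM (P.sA a) g.1 (P.sA a') f.1 h.1 _ _ _ _
  · rw [P.G2 h.1 g.1 (P.sA a') f.1 (g.2.2.trans h.2.2.symm)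
        (g.2.1.trans (P.sA_spec a').symm) (by rw [P.β_op])
        ((P.sA_spec a').trans f.2.2.symm) (g.2.1.trans f.2.2.symm),
      P.opM h.1 (P.sA a) f.1 g.1 (P.sA a) f.2.1 (f.2.2.trans g.2.1.symm)
        (g.2.2.trans h.2.2.symm) rfl]
    simp only [P.U2]
  · exact P.opL (P.sA a) f.1 g.1 (P.sB b'') h.1 _ _ _ _
  · exact (P.opL h.1 (P.sA a'') g.1 f.1 (P.sA a) _ _ _ _).symm
  · rw [P.opM (P.sA a) g.1 f.1 (P.sA a) h.1 (f.2.2.trans g.2.2.symm)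
        (f.2.1.trans (P.sA_spec a).symm) rfl (g.2.1.trans h.2.1.symm),
      P.U1]
    exact (P.G1 f.1 (P.sB b') g.1 h.1 (g.2.2.trans (P.sB_spec b').symm)
      (g.2.1.trans h.2.1.symm) ((P.sB_spec b').trans f.2.2.symm)
      (by rw [P.α_op]) (g.2.2.trans f.2.2.symm)).symm
  · rw [P.opM h.1 f.1 (P.sB b') g.1 (P.sA a) ((P.sB_spec b').trans f.2.2.symm)
      g.2.1.symm (g.2.2.trans h.2.2.symm) (f.2.1.trans (P.sA_spec a).symm)]
    exact (P.opL h.1 g.1 (P.sB b') f.1 (P.sA a) (g.2.2.trans h.2.2.symm) g.2.1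
      (f.2.2.trans (P.sB_spec b').symm) (f.2.1.trans (P.sA_spec a).symm)).symm
  · exact P.opL f.1 (P.sB b') g.1 (P.sB b'') h.1 _ _ _ _
  · exact (P.opL h.1 (P.sA a'') g.1 (P.sA a') f.1 _ _ _ _).symm
  · exact P.opM (P.sB b) g.1 (P.sA a') f.1 h.1 _ _ _ _
  · rw [P.G2 h.1 g.1 (P.sA a') f.1 (g.2.2.trans h.2.2.symm)
        (g.2.1.trans (P.sA_spec a').symm) (by rw [P.β_op])
        ((P.sA_spec a').trans f.2.1.symm) (g.2.1.trans f.2.1.symm),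
      P.opM h.1 (P.sB b) f.1 g.1 (P.sB b) (f.2.2.trans (P.sB_spec b).symm)
        (f.2.1.trans g.2.1.symm) (g.2.2.trans h.2.2.symm) rfl]
    simp only [P.U2]
  · exact P.opL (P.sB b) f.1 g.1 (P.sB b'') h.1 _ _ _ _
  · exact (P.opL h.1 (P.sA a'') g.1 f.1 (P.sB b) _ _ _ _).symm
  · rw [P.opM (P.sB b) g.1 f.1 (P.sB b) h.1 (f.2.2.trans g.2.2.symm)
        f.2.1 rfl (g.2.1.trans h.2.1.symm),
      P.U1]
    exact (P.G1 f.1 (P.sB b') g.1 h.1 (g.2.2.trans (P.sB_spec b').symm)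
      (g.2.1.trans h.2.1.symm) ((P.sB_spec b').trans f.2.2.symm)
      (by rw [P.α_op]) (g.2.2.trans f.2.2.symm)).symm
  · rw [P.opM h.1 f.1 (P.sB b') g.1 (P.sB b) ((P.sB_spec b').trans f.2.2.symm)
      g.2.1.symm (g.2.2.trans h.2.2.symm) f.2.1]
    exact (P.opL h.1 g.1 (P.sB b') f.1 (P.sB b) (g.2.2.trans h.2.2.symm) g.2.1
      (f.2.2.trans (P.sB_spec b').symm) f.2.1).symm
  · exact P.opL f.1 (P.sB b') g.1 (P.sB b'') h.1 _ _ _ _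

theorem envInvComp : ∀ {u v : Env P} (f : EnvHom P u v),
    envComp P (envInv P f) f = envId P v := by
  rintro (a|b) (a'|b') f <;> apply Subtype.ext <;> simp only [envComp, envInv, envId]
  · exact (P.G1 f.1 (P.sA a) f.1 (P.sA a') f.2.1 (f.2.2.trans (P.sA_spec a').symm)
      f.2.1.symm (by rw [P.α_op]) rfl).trans
      (P.U1 f.1 (P.sA a') rfl (f.2.2.trans (P.sA_spec a').symm))
  · exact P.U2 (P.sB b') f.1 _ _
  · exact P.U1 f.1 (P.sA a') _ _
  · exact (P.G2 (P.sB b') f.1 (P.sB b) f.1 (f.2.2.trans (P.sB_spec b').symm) f.2.1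
      (by rw [P.β_op]) f.2.1.symm rfl).trans
      (P.U2 (P.sB b') f.1 (f.2.2.trans (P.sB_spec b').symm) rfl)

theorem envCompInv : ∀ {u v : Env P} (f : EnvHom P u v),
    envComp P f (envInv P f) = envId P u := by
  rintro (a|b) (a'|b') f <;> apply Subtype.ext <;> simp only [envComp, envInv, envId]
  · exact (P.G2 (P.sA a) f.1 (P.sA a') f.1 f.2.1 (f.2.2.trans (P.sA_spec a').symm)
      (by rw [P.β_op]) ((P.sA_spec a').trans f.2.2.symm) rfl).trans
      (P.U2 (P.sA a) f.1 f.2.1 rfl)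
  · exact P.U1 f.1 (P.sA a) _ _
  · exact P.U2 (P.sB b) f.1 _ _
  · exact (P.G1 f.1 (P.sB b') f.1 (P.sB b) (f.2.2.trans (P.sB_spec b').symm) f.2.1
      ((P.sB_spec b').trans f.2.2.symm) (by rw [P.α_op]) rfl).trans
      (P.U1 f.1 (P.sB b) rfl f.2.1)

noncomputable instance envGroupoid : Groupoid (Env P) where
  Hom := EnvHom P
  id := envId P
  comp := envComp P
  id_comp := envIdComp P
  comp_id := envCompId P
  assoc := envAssoc P
  inv := envInv P
  inv_comp := envInvComp P
  comp_inv := envCompInv P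

end Envelope

section EnvFunctor

open Pregroupoid

variable {P Q : PregroupoidObj} (F : PregroupoidHom P Q)

/-- Action of a pregroupoid morphism on hom-sets of the enveloping groupoids. -/
noncomputable def envHomMap : ∀ {u v : Env P.str}, EnvHom P.str u v →
    EnvHom Q.str (Sum.map F.f0 F.f1 u) (Sum.map F.f0 F.f1 v)
  | Sum.inl a, Sum.inl a', f =>
      ⟨Q.str.op (F.f f.1) (F.f (P.str.sA a)) (Q.str.sA (F.f0 a))
          (by rw [F.hβ, F.hβ, f.2.1]) (by rw [F.hα, P.str.sA_spec, Q.str.sA_spec]),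
        by rw [Q.str.β_op], by rw [Q.str.α_op, F.hα, f.2.2]⟩
  | Sum.inl _a, Sum.inr _b, f => ⟨F.f f.1, by rw [F.hα, f.2.1], by rw [F.hβ, f.2.2]⟩
  | Sum.inr _b, Sum.inl _a, f => ⟨F.f f.1, by rw [F.hα, f.2.1], by rw [F.hβ, f.2.2]⟩
  | Sum.inr b, Sum.inr b', f =>
      ⟨Q.str.op (Q.str.sB (F.f1 b)) (F.f (P.str.sB b)) (F.f f.1)
          (by rw [F.hβ, P.str.sB_spec, Q.str.sB_spec]) (by rw [F.hα, F.hα, f.2.1]),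
        by rw [Q.str.α_op], by rw [Q.str.β_op, F.hβ, f.2.2]⟩

theorem envHomMap_id : ∀ u : Env P.str,
    envHomMap F (envId P.str u) = envId Q.str (Sum.map F.f0 F.f1 u) := by
  rintro (a|b) <;> apply Subtype.ext <;>
    simp only [Sum.map_inl, Sum.map_inr, envHomMap, envId]
  · exact Q.str.U1 _ _ _ _
  · exact Q.str.U2 _ _ _ _

theorem envHomMap_comp : ∀ {u v w : Env P.str} (f : EnvHom P.str u v) (g : EnvHom P.str v w),
    envHomMap F (envComp P.str f g) = envComp Q.str (envHomMap F f) (envHomMap F g) := by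
  rintro (a|b) (a'|b') (a''|b'') f g <;> apply Subtype.ext <;>
    simp only [Sum.map_inl, Sum.map_inr, envComp, envHomMap] <;>
    simp only [F.hop, F.hα, F.hβ, f.2.1, f.2.2, g.2.1, g.2.2, P.str.sA_spec, P.str.sB_spec,
      Q.str.sA_spec, Q.str.sB_spec]
  · rw [Q.str.G2 (F.f g.1) (F.f (P.str.sA a')) (Q.str.sA (F.f0 a')) _ _ _ _ _ _]
    exact Q.str.opL (F.f g.1) (F.f (P.str.sA a')) (F.f f.1) (F.f (P.str.sA a))
      (Q.str.sA (F.f0 a)) _ _ _ _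
    all_goals simp [F.hα, F.hβ, P.str.sA_spec, P.str.sB_spec, Q.str.sA_spec, Q.str.sB_spec,
      Q.str.α_op, Q.str.β_op, f.2.1, f.2.2, g.2.1, g.2.2]
  · rw [Q.str.opM (Q.str.sA (F.f0 a)) (F.f f.1) (F.f (P.str.sA a)) (Q.str.sA (F.f0 a))
        (F.f g.1) _ _ _ _,
      Q.str.U1]
    all_goals simp [F.hα, F.hβ, P.str.sA_spec, P.str.sB_spec, Q.str.sA_spec, Q.str.sB_spec,
      Q.str.α_op, Q.str.β_op, f.2.1, f.2.2, g.2.1, g.2.2]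
  · exact Q.str.G2 (F.f g.1) (F.f f.1) (F.f (P.str.sA a)) (Q.str.sA (F.f0 a)) _ _ _ _ _
  · exact (Q.str.G1 (F.f f.1) (Q.str.sB (F.f1 b')) (F.f (P.str.sB b')) (F.f g.1)
      _ _ _ _ _).symm
  · exact (Q.str.G2 (F.f g.1) (F.f (P.str.sA a')) (Q.str.sA (F.f0 a')) (F.f f.1)
      _ _ _ _ _).symm
  · exact Q.str.G1 (Q.str.sB (F.f1 b)) (F.f (P.str.sB b)) (F.f f.1) (F.f g.1) _ _ _ _ _
  · rw [Q.str.opM (F.f g.1) (Q.str.sB (F.f1 b)) (F.f (P.str.sB b)) (F.f f.1)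
        (Q.str.sB (F.f1 b)) _ _ _ _]
    simp only [Q.str.U2]
    all_goals simp [F.hα, F.hβ, P.str.sA_spec, P.str.sB_spec, Q.str.sA_spec, Q.str.sB_spec,
      Q.str.α_op, Q.str.β_op, f.2.1, f.2.2, g.2.1, g.2.2]
  · rw [Q.str.G1 (Q.str.op (Q.str.sB (F.f1 b)) (F.f (P.str.sB b)) (F.f f.1) _ _)
        (Q.str.sB (F.f1 b')) (F.f (P.str.sB b')) (F.f g.1) _ _ _ _ _]
    exact (Q.str.opL (Q.str.sB (F.f1 b)) (F.f (P.str.sB b)) (F.f f.1)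
      (F.f (P.str.sB b')) (F.f g.1) _ _ _ _).symm
    all_goals simp [F.hα, F.hβ, P.str.sA_spec, P.str.sB_spec, Q.str.sA_spec, Q.str.sB_spec,
      Q.str.α_op, Q.str.β_op, f.2.1, f.2.2, g.2.1, g.2.2]

/-- The enveloping groupoid functor on a morphism of pregroupoids. -/
noncomputable def envMap : Env P.str ⥤ Env Q.str where
  obj := Sum.map F.f0 F.f1
  map := envHomMap F
  map_id u := envHomMap_id F u
  map_comp f g := envHomMap_comp F f g

end EnvFunctor

section EnvFunctorAssembly

open Pregroupoid

/-- The enveloping groupoid as an object of `GrpdObj`. -/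
noncomputable abbrev envObj (P : PregroupoidObj) : GrpdObj where
  C := Env P.str
  str := envGroupoid P.str
  ne := ⟨Sum.inl (P.str.α (Classical.choice P.str.nonempty))⟩

/-- The enveloping groupoid functor `X ↦ X⁺`. -/
noncomputable def envFunctor : PregroupoidObj ⥤ GrpdObj where
  obj := envObj
  map {P Q} F := envMap F
  map_id P := by
    refine CategoryTheory.Functor.ext (fun u => by cases u <;> rfl) ?_
    rintro (a|b) (a'|b') f <;>
      erw [eqToHom_refl, eqToHom_refl, Category.id_comp, Category.comp_id]
    · exact Subtype.ext (P.str.U2 f.1 (P.str.sA a) _ _)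
    · exact Subtype.ext rfl
    · exact Subtype.ext rfl
    · exact Subtype.ext (P.str.U1 (P.str.sB b) f.1 _ _)
  map_comp {P Q R} F G := by
    refine CategoryTheory.Functor.ext (fun u => by cases u <;> rfl) ?_
    rintro (a|b) (a'|b') f <;>
      erw [eqToHom_refl, eqToHom_refl, Category.id_comp, Category.comp_id]
    · show envHomMap (F ≫ G) f = envHomMap G (envHomMap F f)
      apply Subtype.ext
      dsimp only [Sum.map_inl, Sum.map_inr]
      simp only [envHomMap]
      simp only [G.hop, G.hα, G.hβ, F.hα, F.hβ, P.str.sA_spec, P.str.sB_spec,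
        Q.str.sA_spec, Q.str.sB_spec, f.2.1, f.2.2, Function.comp_apply]
      exact (R.str.G2 (G.f (F.f f.1)) (G.f (F.f (P.str.sA a))) (G.f (Q.str.sA (F.f0 a)))
        (R.str.sA (G.f0 (F.f0 a))) _ _ _ _ _).symm
    · exact Subtype.ext rfl
    · exact Subtype.ext rfl
    · show envHomMap (F ≫ G) f = envHomMap G (envHomMap F f)
      apply Subtype.ext
      dsimp only [Sum.map_inl, Sum.map_inr]
      simp only [envHomMap]
      simp only [G.hop, G.hα, G.hβ, F.hα, F.hβ, P.str.sA_spec, P.str.sB_spec,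
        Q.str.sA_spec, Q.str.sB_spec, f.2.1, f.2.2, Function.comp_apply]
      exact (R.str.G1 (R.str.sB (G.f1 (F.f1 b))) (G.f (Q.str.sB (F.f1 b)))
        (G.f (F.f (P.str.sB b))) (G.f (F.f f.1)) _ _ _ _ _).symm

end EnvFunctorAssembly

section Eps

open Pregroupoid

theorem GArr_ext {C : Type} [Groupoid C] {c c' d d' : C} (g : c ⟶ d) (g' : c' ⟶ d')
    (h : c = c') (h' : d = d') (hg : g = eqToHom h ≫ g' ≫ eqToHom h'.symm) :
    (⟨c, d, g⟩ : GArr C) = ⟨c', d', g'⟩ := by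
  subst h; subst h'
  simp only [eqToHom_refl, Category.id_comp, Category.comp_id] at hg
  rw [hg]

theorem GArr_hom_eq {C : Type} [Groupoid C] {σ τ : GArr C} (h : σ = τ) :
    σ.2.2 = eqToHom (congrArg (fun s : GArr C => s.1) h) ≫ τ.2.2
      ≫ eqToHom (congrArg (fun s : GArr C => s.2.1) h).symm := by
  subst h; simp

variable {A B X : Type} (P : Pregroupoid A B X)

abbrev inlE (a : A) : Env P := Sum.inl a

abbrev inrE (b : B) : Env P := Sum.inr b

/-- The generator arrow of the enveloping groupoid attached to `x : X`. -/
noncomputable abbrev eps (x : X) : inlE P (P.α x) ⟶ inrE P (P.β x) :=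
  ⟨x, rfl, rfl⟩

theorem hatX {a : A} {b : B} (x : X) (ha : P.α x = a) (hb : P.β x = b) :
    (⟨x, ha, hb⟩ : inlE P a ⟶ inrE P b)
      = eqToHom (congrArg (inlE P) ha.symm) ≫ eps P x ≫ eqToHom (congrArg (inrE P) hb) := by
  subst ha; subst hb
  simp only [eqToHom_refl, Category.id_comp, Category.comp_id]

theorem invX {a : A} {b : B} (x : X) (ha : P.α x = a) (hb : P.β x = b) :
    (⟨x, ha, hb⟩ : inrE P b ⟶ inlE P a)
      = eqToHom (congrArg (inrE P) hb.symm) ≫ Groupoid.inv (eps P x)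
        ≫ eqToHom (congrArg (inlE P) ha) := by
  subst ha; subst hb
  simp only [eqToHom_refl, Category.id_comp, Category.comp_id]
  rfl

theorem comp_eps_op (y x z : X) (h1 : P.β x = P.β y) (h2 : P.α x = P.α z) :
    eps P y ≫ (⟨x, h2, h1⟩ : inrE P (P.β y) ⟶ inlE P (P.α z)) ≫ eps P z
      = ⟨P.op y x z h1 h2, by rw [P.α_op], by rw [P.β_op]⟩ := by
  apply Subtype.ext
  show (envComp P (u := Sum.inl (P.α y)) (v := Sum.inr (P.β y)) (w := Sum.inr (P.β z))
    ⟨y, rfl, rfl⟩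
    (envComp P (u := Sum.inr (P.β y)) (v := Sum.inl (P.α z)) (w := Sum.inr (P.β z))
      ⟨x, h2, h1⟩ ⟨z, rfl, rfl⟩)).1 = P.op y x z h1 h2
  simp only [envComp]
  exact P.G1 y (P.sB (P.β y)) x z _ _ _ _ _

theorem eps_op_sandwich (y x z : X) (h1 : P.β x = P.β y) (h2 : P.α x = P.α z) :
    eqToHom (congrArg (inlE P) (P.α_op y x z h1 h2).symm)
        ≫ eps P (P.op y x z h1 h2)
        ≫ eqToHom (congrArg (inrE P) (P.β_op y x z h1 h2))
      = eps P y ≫ (eqToHom (congrArg (inrE P) h1.symm) ≫ Groupoid.inv (eps P x)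
          ≫ eqToHom (congrArg (inlE P) h2)) ≫ eps P z := by
  rw [← invX P x h2 h1]
  rw [comp_eps_op P y x z h1 h2]
  exact (hatX P (P.op y x z h1 h2) (by rw [P.α_op]) (by rw [P.β_op])).symm

end Eps

section AdjTo

open Pregroupoid

variable (P : PregroupoidObj) (G : GrpdObj)

/-- From a functor out of the enveloping groupoid to a morphism of pregroupoids. -/
noncomputable def adjTo (Φ : Env P.str ⥤ G.C) :
    PregroupoidHom P (forgetToPregroupoid.obj G) where
  f0 a := Φ.obj (inlE P.str a)
  f1 b := Φ.obj (inrE P.str b)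
  f x := ⟨Φ.obj (inlE P.str (P.str.α x)), Φ.obj (inrE P.str (P.str.β x)),
    Φ.map (eps P.str x)⟩
  hα _ := rfl
  hβ _ := rfl
  hop y x z h1 h2 h1' h2' := by
    refine GArr_ext _ _
      (congrArg (fun t => Φ.obj (inlE P.str t)) (P.str.α_op y x z h1 h2))
      (congrArg (fun t => Φ.obj (inrE P.str t)) (P.str.β_op y x z h1 h2)) ?_
    have e3 := congrArg (fun t => Φ.map t) (eps_op_sandwich P.str y x z h1 h2)
    simp only [Functor.map_comp, eqToHom_map, Groupoid.inv_eq_inv, Functor.map_inv,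
      Category.assoc] at e3
    show Φ.map (eps P.str (P.str.op y x z h1 h2)) = _
    simp only [underlyingPregroupoid, Groupoid.inv_eq_inv, Category.assoc]
    rw [← cancel_epi (eqToHom
        (congrArg (fun t => Φ.obj (inlE P.str t)) (P.str.α_op y x z h1 h2).symm)),
      ← cancel_mono (eqToHom
        (congrArg (fun t => Φ.obj (inrE P.str t)) (P.str.β_op y x z h1 h2)))]
    simp only [Category.assoc]
    rw [e3]
    simp

end AdjTo

section AdjFrom

open Pregroupoid

variable {P : PregroupoidObj} {G : GrpdObj}

/-- Object parts of a pregroupoid morphism into `G(G₀,G₀)`, retyped. -/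
abbrev fA (F : PregroupoidHom P (forgetToPregroupoid.obj G)) : P.A → G.C := F.f0

abbrev fB (F : PregroupoidHom P (forgetToPregroupoid.obj G)) : P.B → G.C := F.f1

/-- The basic arrow in `G` attached to `x : X` by a morphism
`F : P ⟶ G(G₀,G₀)` of pregroupoids. -/
noncomputable def arr (F : PregroupoidHom P (forgetToPregroupoid.obj G)) (x : P.X) :
    fA F (P.str.α x) ⟶ fB F (P.str.β x) :=
  eqToHom (show fA F (P.str.α x) = (F.f x).1 from (F.hα x).symm) ≫ (F.f x).2.2
    ≫ eqToHom (show (F.f x).2.1 = fB F (P.str.β x) from F.hβ x)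

theorem arr_op (F : PregroupoidHom P (forgetToPregroupoid.obj G)) (y x z : P.X)
    (h1 : P.str.β x = P.str.β y) (h2 : P.str.α x = P.str.α z) :
    arr F (P.str.op y x z h1 h2)
      = eqToHom (congrArg (fA F) (P.str.α_op y x z h1 h2)) ≫ arr F y
        ≫ eqToHom (congrArg (fB F) h1.symm) ≫ Groupoid.inv (arr F x)
        ≫ eqToHom (congrArg (fA F) h2) ≫ arr F z
        ≫ eqToHom (congrArg (fB F) (P.str.β_op y x z h1 h2).symm) := by
  have hop := F.hop y x z h1 h2 (by rw [F.hβ, F.hβ, h1]) (by rw [F.hα, F.hα, h2])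
  have he := GArr_hom_eq hop
  simp only [arr]
  rw [he]
  simp [forgetToPregroupoid, underlyingPregroupoid, Groupoid.inv_eq_inv]
  erw [eqToHom_trans_assoc, eqToHom_trans]

/-- The functor out of the enveloping groupoid, on arrows. -/
noncomputable def adjMap (F : PregroupoidHom P (forgetToPregroupoid.obj G)) :
    ∀ {u v : Env P.str}, EnvHom P.str u v →
      ((Sum.elim (fA F) (fB F) u) ⟶ (Sum.elim (fA F) (fB F) v))
  | Sum.inl a, Sum.inl _a', f =>
      eqToHom (congrArg (fA F) (P.str.sA_spec a).symm) ≫ arr F (P.str.sA a)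
        ≫ eqToHom (congrArg (fB F) f.2.1.symm) ≫ Groupoid.inv (arr F f.1)
        ≫ eqToHom (congrArg (fA F) f.2.2)
  | Sum.inl _a, Sum.inr _b, f =>
      eqToHom (congrArg (fA F) f.2.1.symm) ≫ arr F f.1
        ≫ eqToHom (congrArg (fB F) f.2.2)
  | Sum.inr _b, Sum.inl _a, f =>
      eqToHom (congrArg (fB F) f.2.2.symm) ≫ Groupoid.inv (arr F f.1)
        ≫ eqToHom (congrArg (fA F) f.2.1)
  | Sum.inr b, Sum.inr _b', f =>
      eqToHom (congrArg (fB F) (P.str.sB_spec b).symm) ≫ Groupoid.inv (arr F (P.str.sB b))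
        ≫ eqToHom (congrArg (fA F) f.2.1.symm) ≫ arr F f.1
        ≫ eqToHom (congrArg (fB F) f.2.2)

set_option maxHeartbeats 1000000 in
/-- From a morphism of pregroupoids into `G(G₀,G₀)` to a functor out of the
enveloping groupoid. -/
noncomputable def adjFrom (F : PregroupoidHom P (forgetToPregroupoid.obj G)) :
    Env P.str ⥤ G.C where
  obj u := Sum.elim (fA F) (fB F) u
  map {u v} f := adjMap F f
  map_id := by
    rintro (a|b)
    · show adjMap F (envId P.str (Sum.inl a)) = 𝟙 _
      dsimp only [envId, adjMap]
      simp [Groupoid.inv_eq_inv]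
    · show adjMap F (envId P.str (Sum.inr b)) = 𝟙 _
      dsimp only [envId, adjMap]
      simp [Groupoid.inv_eq_inv]
  map_comp := by
    rintro (a|b) (a'|b') (a''|b'') f g <;>
      show adjMap F (envComp P.str f g) = adjMap F f ≫ adjMap F g <;>
      dsimp only [envComp, adjMap] <;>
      simp [arr_op, Groupoid.inv_eq_inv]

end AdjFrom

section Decomp

open Pregroupoid

variable {A B X : Type} (P : Pregroupoid A B X)

theorem decompAA {a a' : A} (p : X) (hp1 : P.β p = P.β (P.sA a)) (hp2 : P.α p = a') :
    (⟨p, hp1, hp2⟩ : inlE P a ⟶ inlE P a')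
      = @CategoryStruct.comp (Env P) _ (inlE P a) (inrE P (P.β (P.sA a))) (inlE P a')
        (⟨P.sA a, P.sA_spec a, rfl⟩ : EnvHom P (Sum.inl a) (Sum.inr (P.β (P.sA a))))
        (⟨p, hp2, hp1⟩ : EnvHom P (Sum.inr (P.β (P.sA a))) (Sum.inl a')) := by
  apply Subtype.ext
  show p = (envComp P (u := Sum.inl a) (v := Sum.inr (P.β (P.sA a))) (w := Sum.inl a')
    ⟨P.sA a, P.sA_spec a, rfl⟩ ⟨p, hp2, hp1⟩).1
  simp only [envComp]
  exact (P.U2 p (P.sA a) _ _).symm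

theorem decompBB {b b' : B} (p : X) (hp1 : P.α p = P.α (P.sB b)) (hp2 : P.β p = b') :
    (⟨p, hp1, hp2⟩ : inrE P b ⟶ inrE P b')
      = @CategoryStruct.comp (Env P) _ (inrE P b) (inlE P (P.α (P.sB b))) (inrE P b')
        (⟨P.sB b, rfl, P.sB_spec b⟩ : EnvHom P (Sum.inr b) (Sum.inl (P.α (P.sB b))))
        (⟨p, hp1, hp2⟩ : EnvHom P (Sum.inl (P.α (P.sB b))) (Sum.inr b')) := by
  apply Subtype.ext
  show p = (envComp P (u := Sum.inr b) (v := Sum.inl (P.α (P.sB b))) (w := Sum.inr b')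
    ⟨P.sB b, rfl, P.sB_spec b⟩ ⟨p, hp1, hp2⟩).1
  simp only [envComp]
  exact (P.U1 (P.sB b) p _ _).symm

end Decomp

theorem PregroupoidHom.ext' {P Q : PregroupoidObj} {F G : PregroupoidHom P Q}
    (h0 : F.f0 = G.f0) (h1 : F.f1 = G.f1) (h : F.f = G.f) : F = G := by
  cases F; cases G
  cases h0; cases h1; cases h
  rfl

section HomEquiv

open Pregroupoid

variable (P : PregroupoidObj) (G : GrpdObj)

set_option maxHeartbeats 1000000 in
/-- The hom-set equivalence of the adjunction. -/
noncomputable def adjHomEquiv :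
    (envObj P ⟶ G) ≃ (P ⟶ forgetToPregroupoid.obj G) where
  toFun := adjTo P G
  invFun := adjFrom
  left_inv Φ := by
    refine CategoryTheory.Functor.ext (fun u => by cases u <;> rfl) ?_
    rintro (a|b) (a'|b') f <;>
      erw [eqToHom_refl, eqToHom_refl, Category.id_comp, Category.comp_id]
    · obtain ⟨p, hp1, hp2⟩ := f
      conv_rhs => rw [decompAA P.str p hp1 hp2,
        hatX P.str (P.str.sA a) (P.str.sA_spec a) rfl, invX P.str p hp2 hp1]
      simp only [adjFrom, adjMap, arr, adjTo, Functor.map_comp, eqToHom_map,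
        Groupoid.inv_eq_inv, Functor.map_inv]
      simp
    · obtain ⟨x, hx1, hx2⟩ := f
      conv_rhs => rw [hatX P.str x hx1 hx2]
      simp only [adjFrom, adjMap, arr, adjTo, Functor.map_comp, eqToHom_map]
      simp
    · obtain ⟨x, hx1, hx2⟩ := f
      conv_rhs => rw [invX P.str x hx1 hx2]
      simp only [adjFrom, adjMap, arr, adjTo, Functor.map_comp, eqToHom_map,
        Groupoid.inv_eq_inv, Functor.map_inv]
      simp
    · obtain ⟨p, hp1, hp2⟩ := f
      conv_rhs => rw [decompBB P.str p hp1 hp2,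
        invX P.str (P.str.sB b) rfl (P.str.sB_spec b), hatX P.str p hp1 hp2]
      simp only [adjFrom, adjMap, arr, adjTo, Functor.map_comp, eqToHom_map,
        Groupoid.inv_eq_inv, Functor.map_inv]
      simp
  right_inv F := by
    refine PregroupoidHom.ext' rfl rfl ?_
    funext x
    show (⟨Sum.elim (fA F) (fB F) (Sum.inl (P.str.α x)),
      Sum.elim (fA F) (fB F) (Sum.inr (P.str.β x)),
      adjMap F (eps P.str x)⟩ : GArr G.C) = F.f x
    refine GArr_ext _ _ (F.hα x).symm (F.hβ x).symm ?_
    dsimp only [eps, adjMap, arr]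
    simp

end HomEquiv

section TheAdjunction

open Pregroupoid

set_option maxHeartbeats 1000000 in
/-- The adjunction between the enveloping groupoid functor and the forgetful
functor. -/
noncomputable def adjAdj : envFunctor ⊣ forgetToPregroupoid :=
  Adjunction.mkOfHomEquiv
    { homEquiv := fun P G => adjHomEquiv P G
      homEquiv_naturality_left_symm := by
        intro P' P Y f g
        show adjFrom (f ≫ g) = envMap f ⋙ adjFrom g
        refine CategoryTheory.Functor.ext (fun u => by cases u <;> rfl) ?_
        rintro (a|b) (a'|b') h <;>
          erw [eqToHom_refl, eqToHom_refl, Category.id_comp, Category.comp_id] <;>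
          show adjMap (f ≫ g) h = adjMap g (envHomMap f h) <;>
          dsimp only [Sum.map_inl, Sum.map_inr]
        · simp only [adjMap, envHomMap]
          rw [arr_op g (f.f h.1) (f.f (P'.str.sA a)) (P.str.sA (f.f0 a))
            (by rw [f.hβ, f.hβ, h.2.1]) (by rw [f.hα, P'.str.sA_spec, P.str.sA_spec])]
          simp only [arr]
          simp [Groupoid.inv_eq_inv]
          erw [eqToHom_trans_assoc, eqToHom_trans_assoc, eqToHom_refl, Category.id_comp,
            IsIso.hom_inv_id_assoc, eqToHom_trans_assoc, eqToHom_trans]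
          try exact rfl
        · simp only [adjMap, envHomMap, arr]
          simp
          erw [eqToHom_trans_assoc, eqToHom_trans]
          try exact rfl
        · simp only [adjMap, envHomMap, arr]
          simp [Groupoid.inv_eq_inv]
          erw [inv_eqToHom, inv_eqToHom, eqToHom_trans_assoc, eqToHom_trans]
          try exact rfl
        · simp only [adjMap, envHomMap]
          rw [arr_op g (P.str.sB (f.f1 b)) (f.f (P'.str.sB b)) (f.f h.1)
            (by rw [f.hβ, P'.str.sB_spec, P.str.sB_spec]) (by rw [f.hα, f.hα, h.2.1])]
          simp only [arr]
          simp [Groupoid.inv_eq_inv]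
          erw [eqToHom_trans_assoc, eqToHom_trans_assoc, eqToHom_refl, Category.id_comp,
            IsIso.inv_hom_id_assoc, eqToHom_trans_assoc, eqToHom_trans]
          try exact rfl
      homEquiv_naturality_right := by
        intro P Y Y' Φ g
        rfl }

/-- Projection extracting the underlying element of `X` from an arrow of the
enveloping groupoid. -/
def envProjAux {A B X : Type} (P : Pregroupoid A B X) :
    ∀ (u v : Env P), EnvHom P u v → X
  | Sum.inl _, Sum.inl _, h => h.1
  | Sum.inl _, Sum.inr _, h => h.1
  | Sum.inr _, Sum.inl _, h => h.1
  | Sum.inr _, Sum.inr _, h => h.1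

def envProj {A B X : Type} (P : Pregroupoid A B X) (σ : GArr (Env P)) : X :=
  envProjAux P σ.1 σ.2.1 σ.2.2

end TheAdjunction


/-- The forgetful functor from inhabited groupoids to
pregroupoids has a left adjoint (the enveloping groupoid construction
`X ↦ X⁺`), and the unit of the adjunction (the front adjunction
`η : X → X⁺(A,B)`) is injective at every pregroupoid. -/
theorem forgetful_has_leftAdjoint_with_injective_unit :
    ∃ (L : PregroupoidObj ⥤ GrpdObj) (adj : L ⊣ forgetToPregroupoid),
      ∀ P : PregroupoidObj,
        Function.Injective (PregroupoidHom.f (adj.unit.app P)) := by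
  refine ⟨envFunctor, adjAdj, fun P x x' hxx => ?_⟩
  exact congrArg (fun σ => envProj P.str σ) hxx

end Kock
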